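/- Let N be a Nijenhuis operator on a BiHom-left-symmetric algebra (A,·,α,β) over a field K of characteristic zero. Then the deformed product x ·_N y = N(x)·y + x·N(y) − N(x·y) makes (A, ·_N, α, β) a BiHom-left-symmetric algebra, and N is a homomorphism of BiHom-left-symmetric algebras from (A, ·_N, α, β) to (A, ·, α, β). -/

import Mathlib

def IsLin (K : Type*) [Field K] {A B : Type*} [AddCommGroup A] [Module K A]
    [AddCommGroup B] [Module K B] (f : A → B) : Prop :=
  ∀ (c : K) (x y : A), f (c • x + y) = c • f x + f y

def IsBilin (K : Type*) [Field K] {A B C : Type*} [AddCommGroup A] [Module K A]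
    [AddCommGroup B] [Module K B] [AddCommGroup C] [Module K C] (f : A → B → C) : Prop :=
  (∀ (c : K) (x x' : A) (y : B), f (c • x + x') y = c • f x y + f x' y) ∧
  (∀ (c : K) (x : A) (y y' : B), f x (c • y + y') = c • f x y + f x y')

/-- A BiHom-Lie algebra structure: a bilinear bracket together with two commuting
multiplicative linear maps `α, β` satisfying BiHom-skew-symmetry and the BiHom-Jacobi
identity. -/
def IsBiHomLie (K : Type*) [Field K] {g : Type*} [AddCommGroup g] [Module K g]
    (br : g → g → g) (α β : g → g) : Prop :=
  IsBilin K br ∧ IsLin K α ∧ IsLin K β ∧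
  (∀ x, α (β x) = β (α x)) ∧
  (∀ x y, α (br x y) = br (α x) (α y)) ∧
  (∀ x y, β (br x y) = br (β x) (β y)) ∧
  (∀ x y, br (β x) (α y) = - br (β y) (α x)) ∧
  (∀ x y z, br (β (β x)) (br (β y) (α z)) + br (β (β y)) (br (β z) (α x))
      + br (β (β z)) (br (β x) (α y)) = 0)

/-- A BiHom-left-symmetric algebra structure: a bilinear product together with two
commuting multiplicative linear maps `α, β` satisfying the BiHom-left-symmetric identity. -/
def IsBiHomLS (K : Type*) [Field K] {A : Type*} [AddCommGroup A] [Module K A]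
    (mul : A → A → A) (α β : A → A) : Prop :=
  IsBilin K mul ∧ IsLin K α ∧ IsLin K β ∧
  (∀ x, α (β x) = β (α x)) ∧
  (∀ x y, α (mul x y) = mul (α x) (α y)) ∧
  (∀ x y, β (mul x y) = mul (β x) (β y)) ∧
  (∀ x y z,
    mul (mul (β x) (α y)) (α (β z)) - mul (α (β x)) (mul (α y) z)
      = mul (mul (β y) (α x)) (α (β z)) - mul (α (β y)) (mul (α x) z))

/-- A representation of a BiHom-Lie algebra `(g, br, α, β)` on `V` with respect to
commuting linear maps `φ, ψ`. -/
def IsBiHomLieRep (K : Type*) [Field K] {g V : Type*} [AddCommGroup g] [Module K g]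
    [AddCommGroup V] [Module K V] (br : g → g → g) (α β : g → g)
    (ρ : g → V →ₗ[K] V) (φ ψ : V →ₗ[K] V) : Prop :=
  IsLin K ρ ∧ (∀ v, φ (ψ v) = ψ (φ v)) ∧
  (∀ x, ρ (α x) ∘ₗ φ = φ ∘ₗ ρ x) ∧
  (∀ x, ρ (β x) ∘ₗ ψ = ψ ∘ₗ ρ x) ∧
  (∀ x y, ρ (br (β x) y) ∘ₗ ψ = ρ (α (β x)) ∘ₗ ρ y - ρ (β y) ∘ₗ ρ (α x))

/-- A representation `(V, L, R, φ, ψ)` of a BiHom-left-symmetric algebra `(A, mul, α, β)`. -/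
def IsBiHomLSRep (K : Type*) [Field K] {A V : Type*} [AddCommGroup A] [Module K A]
    [AddCommGroup V] [Module K V] (mul : A → A → A) (α β : A → A)
    (L R : A → V →ₗ[K] V) (φ ψ : V →ₗ[K] V) : Prop :=
  IsLin K L ∧ IsLin K R ∧ (∀ v, φ (ψ v) = ψ (φ v)) ∧
  (∀ x, φ ∘ₗ L x = L (α x) ∘ₗ φ) ∧
  (∀ x, ψ ∘ₗ L x = L (β x) ∘ₗ ψ) ∧
  (∀ x, φ ∘ₗ R x = R (α x) ∘ₗ φ) ∧
  (∀ x, ψ ∘ₗ R x = R (β x) ∘ₗ ψ) ∧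
  (∀ x y, L (mul (β x) (α y)) ∘ₗ ψ - L (α (β x)) ∘ₗ L (α y)
      = L (mul (β y) (α x)) ∘ₗ ψ - L (α (β y)) ∘ₗ L (α x)) ∧
  (∀ x y, R (β x) ∘ₗ L (β y) ∘ₗ φ - L (α (β y)) ∘ₗ R x ∘ₗ φ
      = R (β x) ∘ₗ R (α y) ∘ₗ ψ - R (mul (α y) x) ∘ₗ φ ∘ₗ ψ)


/-- Auxiliary expression: the two-term left-symmetric "associator" expression. -/
def Dexpr {A : Type*} [AddCommGroup A] (mul : A → A → A) (α β : A → A) (a b c : A) : A :=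
  mul (mul (β a) (α b)) (α (β c)) - mul (α (β a)) (mul (α b) c)

/-- for a Nijenhuis operator `N` on a BiHom-left-symmetric algebra
`(A, ·, α, β)`, the deformed product `x ·_N y = N(x)·y + x·N(y) − N(x·y)` makes
`(A, ·_N, α, β)` a BiHom-left-symmetric algebra and `N` is a homomorphism from
`(A, ·_N, α, β)` to `(A, ·, α, β)`. -/
theorem stmt16 (K : Type*) [Field K] [CharZero K]
    {A : Type*} [AddCommGroup A] [Module K A]
    (mul : A → A → A) (α β : A → A)
    (halg : IsBiHomLS K mul α β)
    (N : A → A) (hN : IsLin K N)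
    (hNα : ∀ x, N (α x) = α (N x)) (hNβ : ∀ x, N (β x) = β (N x))
    (hNij : ∀ x y, mul (N x) (N y) = N (mul (N x) y + mul x (N y) - N (mul x y))) :
    IsBiHomLS K (fun x y => mul (N x) y + mul x (N y) - N (mul x y)) α β ∧
    IsLin K N ∧
    (∀ x y, N (mul (N x) y + mul x (N y) - N (mul x y)) = mul (N x) (N y)) ∧
    (∀ x, N (α x) = α (N x)) ∧ (∀ x, N (β x) = β (N x)) := by
  obtain ⟨⟨hml, hmr⟩, hαl, hβl, hcom, hαm, hβm, hLS⟩ := halg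
  -- derived linearity facts for N
  have N0 : N 0 = 0 := by
    have h := hN 1 (0 : A) 0
    simp only [one_smul, add_zero] at h
    exact (right_eq_add.mp h)
  have Nadd : ∀ a b, N (a + b) = N a + N b := fun a b => by simpa using hN 1 a b
  have Nsmul : ∀ (c : K) (a : A), N (c • a) = c • N a := fun c a => by
    simpa [N0] using hN c a 0
  have Nsub : ∀ a b, N (a - b) = N a - N b := fun a b => by
    have h := hN (-1 : K) b a
    simp only [neg_one_smul] at h
    rw [sub_eq_neg_add, h, ← sub_eq_neg_add]
  -- derived bilinearity facts for mul
  have M0l : ∀ b, mul 0 b = 0 := fun b => by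
    have h := hml 1 (0 : A) 0 b
    simp only [one_smul, add_zero] at h
    exact (right_eq_add.mp h)
  have Maddl : ∀ a a' b, mul (a + a') b = mul a b + mul a' b := fun a a' b => by
    simpa using hml 1 a a' b
  have Msubl : ∀ a a' b, mul (a - a') b = mul a b - mul a' b := fun a a' b => by
    have h := hml (-1 : K) a' a b
    simp only [neg_one_smul] at h
    rw [sub_eq_neg_add, h, ← sub_eq_neg_add]
  have M0r : ∀ a, mul a 0 = 0 := fun a => by
    have h := hmr 1 a (0 : A) 0
    simp only [one_smul, add_zero] at h
    exact (right_eq_add.mp h)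
  have Maddr : ∀ a b b', mul a (b + b') = mul a b + mul a b' := fun a b b' => by
    simpa using hmr 1 a b b'
  have Msubr : ∀ a b b', mul a (b - b') = mul a b - mul a b' := fun a b b' => by
    have h := hmr (-1 : K) a b' b
    simp only [neg_one_smul] at h
    rw [sub_eq_neg_add, h, ← sub_eq_neg_add]
  -- derived linearity facts for α and β
  have αadd : ∀ a b, α (a + b) = α a + α b := fun a b => by simpa using hαl 1 a b
  have α0 : α 0 = 0 := by
    have h := hαl 1 (0 : A) 0
    simp only [one_smul, add_zero] at h
    exact (right_eq_add.mp h)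
  have αsub : ∀ a b, α (a - b) = α a - α b := fun a b => by
    have h := hαl (-1 : K) b a
    simp only [neg_one_smul] at h
    rw [sub_eq_neg_add, h, ← sub_eq_neg_add]
  have βadd : ∀ a b, β (a + b) = β a + β b := fun a b => by simpa using hβl 1 a b
  have βsub : ∀ a b, β (a - b) = β a - β b := fun a b => by
    have h := hβl (-1 : K) b a
    simp only [neg_one_smul] at h
    rw [sub_eq_neg_add, h, ← sub_eq_neg_add]
  -- symmetry of the Dexpr expression (left-symmetric identity)
  have hD : ∀ a b c, Dexpr mul α β a b c = Dexpr mul α β b a c := fun a b c => hLS a b c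
  -- the key decomposition lemma
  have key : ∀ x y z,
      (mul (N (mul (N (β x)) (α y) + mul (β x) (N (α y)) - N (mul (β x) (α y)))) (α (β z))
        + mul (mul (N (β x)) (α y) + mul (β x) (N (α y)) - N (mul (β x) (α y))) (N (α (β z)))
        - N (mul (mul (N (β x)) (α y) + mul (β x) (N (α y)) - N (mul (β x) (α y))) (α (β z))))
      - (mul (N (α (β x))) (mul (N (α y)) z + mul (α y) (N z) - N (mul (α y) z))
        + mul (α (β x)) (N (mul (N (α y)) z + mul (α y) (N z) - N (mul (α y) z)))
        - N (mul (α (β x)) (mul (N (α y)) z + mul (α y) (N z) - N (mul (α y) z))))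
      = Dexpr mul α β (N x) (N y) z + Dexpr mul α β (N x) y (N z)
        + Dexpr mul α β x (N y) (N z)
        + N (N (Dexpr mul α β x y z) - Dexpr mul α β (N x) y z
              - Dexpr mul α β x (N y) z - Dexpr mul α β x y (N z)) := by
    intro x y z
    rw [← hNij (β x) (α y), ← hNij (α y) z]
    simp only [Maddl, Msubl, Maddr, Msubr]
    rw [hNij (mul (β x) (α y)) (α (β z)), hNij (α (β x)) (mul (α y) z)]
    simp only [Dexpr, Nadd, Nsub, hNα, hNβ, Maddl, Msubl, Maddr, Msubr]
    abel
  refine ⟨⟨⟨?_, ?_⟩, hαl, hβl, hcom, ?_, ?_, ?_⟩, hN, fun x y => (hNij x y).symm, hNα, hNβ⟩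
  · intro c x x' y
    simp only [hN, hml, Nadd, Nsmul]
    module
  · intro c x y y'
    simp only [hN, hmr, Nadd, Nsmul]
    module
  · intro x y
    simp only [αadd, αsub, hαm, hNα]
    rw [show N (mul (α x) (α y)) = α (N (mul x y)) by rw [← hαm, hNα]]
  · intro x y
    simp only [βadd, βsub, hβm, hNβ]
    rw [show N (mul (β x) (β y)) = β (N (mul x y)) by rw [← hβm, hNβ]]
  · intro x y z
    simp only []
    rw [key x y z, key y x z, hD (N x) (N y) z, hD (N x) y (N z), hD x (N y) (N z),
      hD x y z, hD (N x) y z, hD x (N y) z, hD x y (N z)]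
    rw [show N (Dexpr mul α β y x z) - Dexpr mul α β y (N x) z - Dexpr mul α β (N y) x z
        - Dexpr mul α β y x (N z)
        = N (Dexpr mul α β y x z) - Dexpr mul α β (N y) x z - Dexpr mul α β y (N x) z
        - Dexpr mul α β y x (N z) from by abel]
    abel
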